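/- Let X, X_1, X_2, ... be i.i.d. with X ∈ DAN (domain of attraction of the normal law) and EX = 0. Then max_{1≤i≤n} |X_i| / V_n → 0 in probability as n → ∞, where V_n^2 = Σ_{i=1}^n X_i^2. -/

import Mathlib

open MeasureTheory Filter Finset

set_option linter.unusedSectionVars false
set_option maxHeartbeats 1000000

namespace DANaux

open ProbabilityTheory Real

section slow
variable (ℓ : ℝ → ℝ) (hmono : Monotone ℓ) (hnn : ∀ x, 0 ≤ ℓ x)
  (b₀ : ℝ) (hb₀ : 0 < b₀) (hb₀pos : 0 < ℓ b₀)
  (hslow : ∀ c > (0 : ℝ), Tendsto (fun x => ℓ (c * x) / ℓ x) atTop (nhds 1))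
include hmono hnn hb₀ hb₀pos hslow

lemma slow_doubling {δ : ℝ} (hδ : 0 < δ) : ∀ᶠ x in atTop, ℓ (2 * x) ≤ (1 + δ) * ℓ x := by
  have h1 := (hslow 2 two_pos).eventually (eventually_le_nhds (by linarith : (1:ℝ) < 1 + δ))
  filter_upwards [h1, eventually_ge_atTop b₀] with x hx hxb
  have hpos : 0 < ℓ x := lt_of_lt_of_le hb₀pos (hmono hxb)
  calc ℓ (2 * x) = (ℓ (2 * x) / ℓ x) * ℓ x := by field_simp
  _ ≤ (1 + δ) * ℓ x := mul_le_mul_of_nonneg_right hx (hnn x)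

lemma slow_ell_le_sq {η : ℝ} (hη : 0 < η) : ∀ᶠ x in atTop, ℓ x ≤ η * x ^ 2 := by
  obtain ⟨M, hM⟩ := ((slow_doubling ℓ hmono hnn b₀ hb₀ hb₀pos hslow one_pos).and
    (eventually_ge_atTop (max b₀ 1))).exists_forall_of_atTop
  have hM1 : (1:ℝ) ≤ M := le_trans (le_max_right _ _) (hM M le_rfl).2
  have hMb₀ : b₀ ≤ M := le_trans (le_max_left _ _) (hM M le_rfl).2
  have hMpos : 0 < M := lt_of_lt_of_le one_pos hM1
  have hdbl : ∀ x ≥ M, ℓ (2 * x) ≤ 2 * ℓ x := by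
    intro x hx; have := (hM x hx).1; linarith
  -- induction: ℓ (2^k M) ≤ 2^k ℓ M
  have hind : ∀ k : ℕ, ℓ (2 ^ k * M) ≤ 2 ^ k * ℓ M := by
    intro k
    induction k with
    | zero => simp
    | succ k ih =>
      have h2 : (2:ℝ) ^ (k+1) * M = 2 * (2 ^ k * M) := by ring
      rw [h2]
      calc ℓ (2 * (2 ^ k * M)) ≤ 2 * ℓ (2 ^ k * M) := by
            refine hdbl _ ?_
            nlinarith [one_le_pow₀ (one_le_two (α := ℝ)) (n := k)]
      _ ≤ 2 * (2 ^ k * ℓ M) := by linarith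
      _ = 2 ^ (k+1) * ℓ M := by ring
  obtain ⟨K, hK⟩ : ∃ K : ℕ, 2 * ℓ M ≤ η * 2 ^ K * M ^ 2 := by
    obtain ⟨K, hK⟩ := pow_unbounded_of_one_lt (2 * ℓ M / (η * M ^ 2)) (one_lt_two (α := ℝ))
    exact ⟨K, by rw [div_lt_iff₀ (by positivity)] at hK; nlinarith⟩
  filter_upwards [eventually_ge_atTop (2 ^ K * M)] with y hy
  have hyM : M ≤ y := le_trans (by nlinarith [one_le_pow₀ (one_le_two (α := ℝ)) (n := K)]) hy
  have hypos : 0 < y := lt_of_lt_of_le hMpos hyM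
  set m : ℕ := ⌊y / M⌋₊ with hm
  have hm1 : (2:ℕ) ^ K ≤ m := Nat.le_floor (by rw [le_div_iff₀ hMpos]; push_cast; nlinarith)
  have hmpos : 1 ≤ m := le_trans (Nat.one_le_two_pow) hm1
  set k : ℕ := Nat.log 2 m with hk
  have hk1 : (2:ℕ) ^ k ≤ m := Nat.pow_log_le_self 2 (by omega)
  have hk2 : m < 2 ^ (k + 1) := Nat.lt_pow_succ_log_self (by norm_num) m
  have hKk : K ≤ k := by
    have h4 : (2:ℕ) ^ K < 2 ^ (k+1) := lt_of_le_of_lt hm1 hk2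
    have := (Nat.pow_lt_pow_iff_right (by norm_num : 1 < 2)).mp h4
    omega
  have hlow : (2:ℝ) ^ k * M ≤ y := by
    have : (2:ℝ) ^ k ≤ m := by exact_mod_cast hk1
    have h2 : (m : ℝ) ≤ y / M := Nat.floor_le (by positivity)
    rw [← le_div_iff₀ hMpos] at *; linarith
  have hhigh : y ≤ 2 ^ (k+1) * M := by
    have h2 : y / M < m + 1 := Nat.lt_floor_add_one _
    have h3 : (m:ℝ) + 1 ≤ 2 ^ (k+1) := by exact_mod_cast Nat.succ_le_of_lt hk2
    rw [div_lt_iff₀ hMpos] at h2; nlinarith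
  have hly : ℓ y ≤ 2 ^ (k+1) * ℓ M := le_trans (hmono hhigh) (hind (k+1))
  have hKk' : (2:ℝ) ^ K ≤ 2 ^ k := by
    exact_mod_cast pow_le_pow_right₀ (one_le_two (α := ℝ)) hKk
  have hy2 : (2:ℝ) ^ k * M ≤ y := hlow
  have hllM : 0 ≤ ℓ M := hnn M
  have h2k : (0:ℝ) < 2 ^ k := by positivity
  have e1 : (2:ℝ)^k * (2:ℝ)^k * M^2 ≤ y^2 := by
    have h5 := mul_le_mul hy2 hy2 (by positivity) (le_of_lt hypos)
    nlinarith
  calc ℓ y ≤ 2 ^ (k+1) * ℓ M := hly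
  _ = 2^k * (2 * ℓ M) := by ring
  _ ≤ 2^k * (η * 2 ^ K * M ^ 2) := by nlinarith [mul_le_mul_of_nonneg_left hK h2k.le]
  _ ≤ 2^k * (η * 2 ^ k * M ^ 2) := by
    have h6 : η * 2 ^ K * M ^ 2 ≤ η * 2 ^ k * M ^ 2 := by nlinarith [mul_le_mul_of_nonneg_left hKk' (by positivity : (0:ℝ) ≤ η * M ^ 2)]
    nlinarith [mul_le_mul_of_nonneg_left h6 h2k.le]
  _ = η * ((2:ℝ)^k * (2:ℝ)^k * M^2) := by ring
  _ ≤ η * y ^ 2 := by nlinarith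

end slow

section prob
variable {Ω : Type*} [MeasurableSpace Ω] {μ : Measure Ω} [IsProbabilityMeasure μ]

lemma dan_intOn (W : Ω → ℝ) (hW : Measurable W) (x : ℝ) :
    IntegrableOn (fun ω => W ω ^ 2) {ω | |W ω| ≤ x} μ := by
  have hs : MeasurableSet {ω | |W ω| ≤ x} := measurableSet_le hW.abs measurable_const
  refine Integrable.mono' (integrable_const (x ^ 2)) ((hW.pow_const 2).aestronglyMeasurable.restrict) ?_
  rw [ae_restrict_iff' hs]
  filter_upwards with ω hω
  have h1 : |W ω| ≤ x := hω
  have : ‖W ω ^ 2‖ = |W ω| ^ 2 := by rw [Real.norm_eq_abs, sq_abs, ← sq_abs]; exact abs_of_nonneg (sq_nonneg _)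
  rw [this]
  nlinarith [abs_nonneg (W ω)]


lemma dan_ell_nonneg (W : Ω → ℝ) (hW : Measurable W) (x : ℝ) :
    0 ≤ ∫ ω in {ω | |W ω| ≤ x}, W ω ^ 2 ∂μ :=
  setIntegral_nonneg (measurableSet_le hW.abs measurable_const)
    (fun ω _ => sq_nonneg _)


lemma dan_ell_mono (W : Ω → ℝ) (hW : Measurable W) :
    Monotone (fun x => ∫ ω in {ω | |W ω| ≤ x}, W ω ^ 2 ∂μ) := by
  intro x y hxy
  refine setIntegral_mono_set (dan_intOn W hW y) ?_ ?_
  · filter_upwards with ω using sq_nonneg _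
  · filter_upwards with ω hω using le_trans hω hxy


lemma dan_shell (W : Ω → ℝ) (hW : Measurable W) (b : ℝ) (hb : 0 < b) :
    b ^ 2 * (μ {ω | b < |W ω| ∧ |W ω| ≤ 2 * b}).toReal ≤
      (∫ ω in {ω | |W ω| ≤ 2 * b}, W ω ^ 2 ∂μ) - ∫ ω in {ω | |W ω| ≤ b}, W ω ^ 2 ∂μ := by
  have hsb : MeasurableSet {ω | |W ω| ≤ b} := measurableSet_le hW.abs measurable_const
  have hset : {ω | b < |W ω| ∧ |W ω| ≤ 2 * b} = {ω | |W ω| ≤ 2 * b} \ {ω | |W ω| ≤ b} := by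
    ext ω; simp [Set.mem_setOf_eq, Set.mem_diff, and_comm, not_le]
  have hdiff := integral_diff (μ := μ) (f := fun ω => W ω ^ 2) hsb (dan_intOn W hW (2*b))
    (fun ω (hω : |W ω| ≤ b) => le_trans hω (by linarith))
  rw [hset, ← hdiff]
  have hms : MeasurableSet ({ω | |W ω| ≤ 2*b} \ {ω | |W ω| ≤ b}) :=
    (measurableSet_le hW.abs measurable_const).diff hsb
  refine setIntegral_ge_of_const_le_real hms (measure_ne_top μ _) ?_
    ((dan_intOn W hW (2*b)).mono_set Set.diff_subset)
  rintro ω ⟨-, h2⟩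
  have : b ≤ |W ω| := le_of_lt (not_le.mp h2)
  calc b ^ 2 ≤ |W ω| ^ 2 := by nlinarith
  _ = W ω ^ 2 := sq_abs _


lemma dan_ell_pos (W : Ω → ℝ) (hW : Measurable W)
    (hnondeg : ¬ ∃ c : ℝ, ∀ᵐ ω ∂μ, W ω = c) :
    ∃ b₀ : ℝ, 0 < b₀ ∧ 0 < ∫ ω in {ω | |W ω| ≤ b₀}, W ω ^ 2 ∂μ := by
  by_contra h
  push_neg at h
  have hzero : ∀ n : ℕ, ∀ᵐ ω ∂μ, ω ∈ {ω | |W ω| ≤ (n+1 : ℝ)} → W ω ^ 2 = 0 := by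
    intro n
    have hs : MeasurableSet {ω | |W ω| ≤ (n+1:ℝ)} := measurableSet_le hW.abs measurable_const
    have hint := dan_intOn W hW (μ := μ) (n+1:ℝ)
    have h0 : ∫ ω in {ω | |W ω| ≤ (n+1:ℝ)}, W ω ^ 2 ∂μ = 0 := by
      have := h (n+1:ℝ) (by positivity)
      have h2 : 0 ≤ ∫ ω in {ω | |W ω| ≤ (n+1:ℝ)}, W ω ^ 2 ∂μ :=
        setIntegral_nonneg hs (fun ω _ => sq_nonneg _)
      linarith
    have := (integral_eq_zero_iff_of_nonneg_ae (μ := μ.restrict {ω | |W ω| ≤ (n+1:ℝ)})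
      (f := fun ω => W ω ^ 2) (by filter_upwards with ω using sq_nonneg _) hint).mp h0
    have this2 : ∀ᵐ ω ∂μ.restrict {ω | |W ω| ≤ (n+1:ℝ)}, W ω ^ 2 = 0 := this
    rw [ae_restrict_iff' hs] at this2
    exact this2
  rw [← ae_all_iff] at hzero
  refine hnondeg ⟨0, ?_⟩
  filter_upwards [hzero] with ω h
  obtain ⟨n, hn⟩ := exists_nat_ge |W ω|
  have := h n (le_trans hn (by linarith))
  exact pow_eq_zero_iff (by norm_num) |>.mp this


lemma toReal_union_le (s A B : Set Ω) (h : s ⊆ A ∪ B) :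
    (μ s).toReal ≤ (μ A).toReal + (μ B).toReal := by
  have h1 : μ s ≤ μ A + μ B := (measure_mono h).trans (measure_union_le A B)
  calc (μ s).toReal ≤ (μ A + μ B).toReal :=
        ENNReal.toReal_mono (by finiteness) h1
  _ = (μ A).toReal + (μ B).toReal := ENNReal.toReal_add (measure_ne_top μ A) (measure_ne_top μ B)


lemma dan_tail (W : Ω → ℝ) (hW : Measurable W)
    (ℓ : ℝ → ℝ) (hℓ : ∀ x, ℓ x = ∫ ω in {ω | |W ω| ≤ x}, W ω ^ 2 ∂μ)
    (hmono : Monotone ℓ) (hnn : ∀ x, 0 ≤ ℓ x)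
    (b₀ : ℝ) (hb₀ : 0 < b₀) (hb₀pos : 0 < ℓ b₀)
    (hdbl : ∀ δ > (0:ℝ), ∀ᶠ x in atTop, ℓ (2 * x) ≤ (1 + δ) * ℓ x)
    {θ : ℝ} (hθ : 0 < θ) :
    ∀ᶠ x in atTop, x ^ 2 * (μ {ω | x < |W ω|}).toReal ≤ θ * ℓ x := by
  set δ : ℝ := min (θ/2) 1 with hδdef
  have hδ : 0 < δ := lt_min (by linarith) one_pos
  have hδ1 : δ ≤ 1 := min_le_right _ _
  have hδθ : 2 * δ ≤ θ := by
    have := min_le_left (θ/2) 1; simp only [hδdef]; linarith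
  obtain ⟨M₀, hM₀⟩ := ((hdbl δ hδ).and (eventually_ge_atTop (1:ℝ))).exists_forall_of_atTop
  filter_upwards [eventually_ge_atTop (max M₀ 1)] with x hx
  have hxM : M₀ ≤ x := le_trans (le_max_left _ _) hx
  have hx1 : (1:ℝ) ≤ x := le_trans (le_max_right _ _) hx
  have hxpos : (0:ℝ) < x := lt_of_lt_of_le one_pos hx1
  have hge : ∀ k : ℕ, M₀ ≤ 2 ^ k * x := by
    intro k
    nlinarith [one_le_pow₀ (one_le_two (α := ℝ)) (n := k)]
  -- growth of ℓ along dyadic scales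
  have hpow : ∀ k : ℕ, ℓ (2 ^ k * x) ≤ (1 + δ) ^ k * ℓ x := by
    intro k
    induction k with
    | zero => simp
    | succ k ih =>
      have h2 : (2:ℝ) ^ (k+1) * x = 2 * (2 ^ k * x) := by ring
      rw [h2]
      calc ℓ (2 * (2 ^ k * x)) ≤ (1 + δ) * ℓ (2 ^ k * x) := (hM₀ _ (hge k)).1
      _ ≤ (1 + δ) * ((1 + δ) ^ k * ℓ x) := by nlinarith
      _ = (1 + δ) ^ (k+1) * ℓ x := by ring
  have hdiff : ∀ k : ℕ, ℓ (2 ^ (k+1) * x) - ℓ (2 ^ k * x) ≤ δ * (1 + δ) ^ k * ℓ x := by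
    intro k
    have h2 : (2:ℝ) ^ (k+1) * x = 2 * (2 ^ k * x) := by ring
    have h3 : ℓ (2 * (2 ^ k * x)) ≤ (1 + δ) * ℓ (2 ^ k * x) := (hM₀ _ (hge k)).1
    have h4 := hpow k
    have h5 := hnn (2 ^ k * x)
    rw [h2]; nlinarith
  -- shell bound scaled down to x²
  have hshell : ∀ k : ℕ, x ^ 2 * (μ {ω | 2 ^ k * x < |W ω| ∧ |W ω| ≤ 2 ^ (k+1) * x}).toReal ≤
      δ * ((1 + δ)/4) ^ k * ℓ x := by
    intro k
    have hb : (0:ℝ) < 2 ^ k * x := by positivity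
    have h6 := dan_shell (μ := μ) W hW (2 ^ k * x) hb
    have h7 : 2 * (2 ^ k * x) = 2 ^ (k+1) * x := by ring
    rw [h7, ← hℓ, ← hℓ] at h6
    have h8 := hdiff k
    have hμnn : (0:ℝ) ≤ (μ {ω | 2 ^ k * x < |W ω| ∧ |W ω| ≤ 2 ^ (k+1) * x}).toReal :=
      ENNReal.toReal_nonneg
    have h40 : ((2:ℝ) ^ k) ^ 2 = 4 ^ k := by
      rw [← pow_mul, mul_comm, pow_mul]; norm_num
    have h9 : x ^ 2 * (μ {ω | 2 ^ k * x < |W ω| ∧ |W ω| ≤ 2 ^ (k+1) * x}).toReal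
        = ((2 ^ k * x) ^ 2 * (μ {ω | 2 ^ k * x < |W ω| ∧ |W ω| ≤ 2 ^ (k+1) * x}).toReal) / 4 ^ k := by
      rw [mul_pow, h40]; field_simp
    rw [h9]
    rw [div_le_iff₀ (by positivity : (0:ℝ) < 4 ^ k)]
    calc (2 ^ k * x) ^ 2 * (μ _).toReal ≤ ℓ (2 ^ (k+1) * x) - ℓ (2 ^ k * x) := h6
    _ ≤ δ * (1 + δ) ^ k * ℓ x := h8
    _ = δ * ((1 + δ)/4) ^ k * ℓ x * 4 ^ k := by rw [div_pow]; field_simp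
  -- telescoping
  have htel : ∀ K : ℕ, (μ {ω | x < |W ω|}).toReal ≤
      (∑ k ∈ range K, (μ {ω | 2 ^ k * x < |W ω| ∧ |W ω| ≤ 2 ^ (k+1) * x}).toReal)
        + (μ {ω | 2 ^ K * x < |W ω|}).toReal := by
    intro K
    induction K with
    | zero => simp
    | succ K ih =>
      rw [sum_range_succ]
      have h10 : (μ {ω | 2 ^ K * x < |W ω|}).toReal ≤
          (μ {ω | 2 ^ K * x < |W ω| ∧ |W ω| ≤ 2 ^ (K+1) * x}).toReal
            + (μ {ω | 2 ^ (K+1) * x < |W ω|}).toReal := by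
        refine toReal_union_le _ _ _ ?_
        intro ω hω
        rcases le_or_gt (|W ω|) (2 ^ (K+1) * x) with h | h
        · exact Or.inl ⟨hω, h⟩
        · exact Or.inr h
      linarith
  -- geometric sum bound
  have hgeom : ∀ K : ℕ, (∑ k ∈ range K, δ * ((1 + δ)/4) ^ k * ℓ x) ≤ 2 * δ * ℓ x := by
    intro K
    have hr : ∀ k : ℕ, δ * ((1 + δ)/4) ^ k * ℓ x ≤ δ * ℓ x * (1/2) ^ k := by
      intro k
      have : ((1 + δ)/4) ^ k ≤ (1/2) ^ k := by
        apply pow_le_pow_left₀ (by positivity) (by linarith)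
      nlinarith [mul_le_mul_of_nonneg_left this (mul_nonneg hδ.le (hnn x))]
    calc (∑ k ∈ range K, δ * ((1 + δ)/4) ^ k * ℓ x) ≤ ∑ k ∈ range K, δ * ℓ x * (1/2) ^ k :=
          sum_le_sum (fun k _ => hr k)
    _ = δ * ℓ x * ∑ k ∈ range K, (1/2) ^ k := by rw [mul_sum]
    _ ≤ δ * ℓ x * 2 := by
        have h11 : ∑ k ∈ range K, ((1:ℝ)/2) ^ k ≤ 2 := by
          have := geom_sum_eq (by norm_num : ((1:ℝ)/2) ≠ 1) K
          rw [this]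
          have : ((1:ℝ)/2) ^ K ≥ 0 := by positivity
          have h12 : ((1:ℝ)/2) ^ K ≤ 1 := pow_le_one₀ (by norm_num) (by norm_num)
          rw [div_le_iff_of_neg (by norm_num : ((1:ℝ)/2 - 1) < 0)]
          linarith
        nlinarith [mul_le_mul_of_nonneg_left h11 (mul_nonneg hδ.le (hnn x))]
    _ = 2 * δ * ℓ x := by ring
  -- tail tendsto 0
  have htail : Tendsto (fun K : ℕ => (μ {ω | 2 ^ K * x < |W ω|}).toReal) atTop (nhds 0) := by
    have hmeas : ∀ K : ℕ, NullMeasurableSet {ω | 2 ^ K * x < |W ω|} μ :=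
      fun K => (measurableSet_lt measurable_const hW.abs).nullMeasurableSet
    have hanti : Antitone (fun K : ℕ => {ω | 2 ^ K * x < |W ω|}) := by
      intro K L hKL ω hω
      have : (2:ℝ) ^ K * x ≤ 2 ^ L * x := by
        have : (2:ℝ) ^ K ≤ 2 ^ L := pow_le_pow_right₀ (one_le_two (α := ℝ)) hKL
        nlinarith
      exact lt_of_le_of_lt this hω
    have hempty : (⋂ K : ℕ, {ω | 2 ^ K * x < |W ω|}) = ∅ := by
      ext ω
      simp only [Set.mem_iInter, Set.mem_setOf_eq, Set.mem_empty_iff_false, iff_false, not_forall,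
        not_lt]
      obtain ⟨K, hK⟩ := pow_unbounded_of_one_lt (|W ω| / x) (one_lt_two (α := ℝ))
      exact ⟨K, by rw [div_lt_iff₀ hxpos] at hK; linarith⟩
    have h13 := tendsto_measure_iInter_atTop (μ := μ) hmeas hanti ⟨0, measure_ne_top μ _⟩
    rw [hempty] at h13
    simp only [measure_empty] at h13
    have h14 := (ENNReal.tendsto_toReal (by simp : (0:ENNReal) ≠ ⊤)).comp h13
    simpa [Function.comp_def] using h14
  -- combine
  have hK : ∀ K : ℕ, x ^ 2 * (μ {ω | x < |W ω|}).toReal ≤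
      θ * ℓ x + x ^ 2 * (μ {ω | 2 ^ K * x < |W ω|}).toReal := by
    intro K
    have h15 := htel K
    have h16 : x ^ 2 * (μ {ω | x < |W ω|}).toReal ≤
        x ^ 2 * ((∑ k ∈ range K, (μ {ω | 2 ^ k * x < |W ω| ∧ |W ω| ≤ 2 ^ (k+1) * x}).toReal)
          + (μ {ω | 2 ^ K * x < |W ω|}).toReal) :=
      mul_le_mul_of_nonneg_left h15 (by positivity)
    have h17 : x ^ 2 * (∑ k ∈ range K, (μ {ω | 2 ^ k * x < |W ω| ∧ |W ω| ≤ 2 ^ (k+1) * x}).toReal)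
        ≤ 2 * δ * ℓ x := by
      rw [mul_sum]
      exact le_trans (sum_le_sum (fun k _ => hshell k)) (hgeom K)
    have h18 : 2 * δ * ℓ x ≤ θ * ℓ x := by nlinarith [hnn x]
    rw [mul_add] at h16
    linarith
  have hlim : Tendsto (fun K : ℕ => θ * ℓ x + x ^ 2 * (μ {ω | 2 ^ K * x < |W ω|}).toReal) atTop
      (nhds (θ * ℓ x + x ^ 2 * 0)) := tendsto_const_nhds.add (htail.const_mul _)
  exact ge_of_tendsto (by simpa using hlim) (Eventually.of_forall hK)


lemma exp_neg_le_quad {u : ℝ} (hu : 0 ≤ u) : Real.exp (-u) ≤ 1 - u + u ^ 2 := by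
  have h1 : Real.exp (-u) * (1 + u) ≤ 1 := by
    have := Real.add_one_le_exp u
    calc Real.exp (-u) * (1 + u) ≤ Real.exp (-u) * Real.exp u := by
          nlinarith [Real.exp_pos (-u)]
    _ = 1 := by rw [← Real.exp_add]; simp
  nlinarith [Real.exp_pos (-u)]


lemma dan_chernoff (X : ℕ → Ω → ℝ) (hmeas : ∀ i, Measurable (X i))
    (hindep : ProbabilityTheory.iIndepFun
      (m := fun _ : ℕ => (inferInstance : MeasurableSpace ℝ)) X μ)
    (hident : ∀ i, μ.map (X i) = μ.map (X 0))
    (n : ℕ) (b : ℝ) (hb : 0 < b) :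
    (μ {ω | ∑ i ∈ Finset.range n, (X i ω) ^ 2 ≤ b ^ 2}).toReal ≤
      Real.exp (1 - n * (∫ ω in {ω | |X 0 ω| ≤ b}, (X 0 ω) ^ 2 ∂μ) / (4 * b ^ 2)) := by
  classical
  set g : ℝ → ℝ := fun v => min (v ^ 2) (b ^ 2) with hg
  have hgmeas : Measurable g := (measurable_id.pow_const 2).min measurable_const
  set Y : ℕ → Ω → ℝ := fun i => g ∘ X i with hY
  have hYmeas : ∀ i, Measurable (Y i) := fun i => hgmeas.comp (hmeas i)
  have hYindep : iIndepFun (m := fun _ : ℕ => (inferInstance : MeasurableSpace ℝ)) Y μ :=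
    hindep.comp (fun _ => g) (fun _ => hgmeas)
  have hYnn : ∀ i ω, 0 ≤ Y i ω := fun i ω => le_min (sq_nonneg _) (sq_nonneg _)
  have hYle : ∀ i ω, Y i ω ≤ b ^ 2 := fun i ω => min_le_right _ _
  set t : ℝ := -(1 / (2 * b ^ 2)) with ht
  have htneg : t ≤ 0 := by
    rw [ht]; simp only [neg_nonpos]; positivity
  -- the sum of X² event is contained in the sum of Y event
  have hsub : {ω | ∑ i ∈ Finset.range n, (X i ω) ^ 2 ≤ b ^ 2} ⊆
      {ω | (∑ i ∈ Finset.range n, Y i) ω ≤ b ^ 2} := by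
    intro ω hω
    have h1 : (∑ i ∈ Finset.range n, Y i) ω = ∑ i ∈ Finset.range n, Y i ω := by
      simp [Finset.sum_apply]
    have h2 : ∑ i ∈ Finset.range n, Y i ω ≤ ∑ i ∈ Finset.range n, (X i ω) ^ 2 :=
      Finset.sum_le_sum (fun i _ => min_le_left _ _)
    simp only [Set.mem_setOf_eq] at hω ⊢
    rw [h1]; exact le_trans h2 hω
  -- integrability of exp(t * ΣY)
  have hintexp : Integrable (fun ω => Real.exp (t * (∑ i ∈ Finset.range n, Y i) ω)) μ := by
    simp only [Finset.sum_apply]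
    refine Integrable.mono' (integrable_const 1) ?_ ?_
    · exact ((Finset.measurable_sum (Finset.range n) (fun i _ => hYmeas i)).const_mul t).exp.aestronglyMeasurable
    · filter_upwards with ω
      rw [Real.norm_eq_abs, abs_of_pos (Real.exp_pos _), Real.exp_le_one_iff]
      have h3 : 0 ≤ ∑ i ∈ Finset.range n, Y i ω :=
        Finset.sum_nonneg (fun i _ => hYnn i ω)
      exact mul_nonpos_of_nonpos_of_nonneg htneg h3
  -- Chernoff
  have hcher := measure_le_le_exp_mul_mgf (μ := μ) (X := ∑ i ∈ Finset.range n, Y i)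
    (b ^ 2) htneg hintexp
  -- mgf of the sum is the product
  have hmgfsum := hYindep.mgf_sum hYmeas (Finset.range n) (t := t)
  -- each mgf equals mgf of Y 0
  have hmgfid : ∀ i, mgf (Y i) μ t = mgf (Y 0) μ t := by
    intro i
    have hx : ∀ j : ℕ, mgf (Y j) μ t = ∫ x, Real.exp (t * g x) ∂(μ.map (X j)) := by
      intro j
      rw [integral_map (hmeas j).aemeasurable]
      · rfl
      · exact ((hgmeas.const_mul t).exp).aestronglyMeasurable
    rw [hx i, hx 0, hident i]
  -- integrability of Y 0 and its square
  have hYint : Integrable (Y 0) μ := by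
    refine Integrable.mono' (integrable_const (b ^ 2)) (hYmeas 0).aestronglyMeasurable ?_
    filter_upwards with ω
    rw [Real.norm_eq_abs, abs_of_nonneg (hYnn 0 ω)]
    exact hYle 0 ω
  have hY2int : Integrable (fun ω => Y 0 ω ^ 2) μ := by
    refine Integrable.mono' (integrable_const (b ^ 4)) ((hYmeas 0).pow_const 2).aestronglyMeasurable ?_
    filter_upwards with ω
    rw [Real.norm_eq_abs, abs_of_nonneg (sq_nonneg _)]
    calc Y 0 ω ^ 2 ≤ (b ^ 2) ^ 2 := by nlinarith [hYnn 0 ω, hYle 0 ω]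
    _ = b ^ 4 := by ring
  set E : ℝ := ∫ ω, Y 0 ω ∂μ with hE
  have hEnn : 0 ≤ E := integral_nonneg (fun ω => hYnn 0 ω)
  -- single mgf bound
  have hmgf0 : mgf (Y 0) μ t ≤ Real.exp (-(E / (4 * b ^ 2))) := by
    have hpt : ∀ ω, Real.exp (t * Y 0 ω) ≤ 1 - Y 0 ω / (2 * b ^ 2) + (Y 0 ω / (2 * b ^ 2)) ^ 2 := by
      intro ω
      have hu : 0 ≤ Y 0 ω / (2 * b ^ 2) := div_nonneg (hYnn 0 ω) (by positivity)
      have h5 : t * Y 0 ω = -(Y 0 ω / (2 * b ^ 2)) := by rw [ht]; field_simp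
      rw [h5]
      exact exp_neg_le_quad hu
    have hintrhs : Integrable (fun ω => 1 - Y 0 ω / (2 * b ^ 2) + (Y 0 ω / (2 * b ^ 2)) ^ 2) μ := by
      refine Integrable.add (Integrable.sub (integrable_const 1) ?_) ?_
      · exact hYint.div_const _
      · have : (fun ω => (Y 0 ω / (2 * b ^ 2)) ^ 2) = fun ω => Y 0 ω ^ 2 / (2 * b ^ 2) ^ 2 := by
          funext ω; rw [div_pow]
        rw [this]; exact hY2int.div_const _
    have hintexp0 : Integrable (fun ω => Real.exp (t * Y 0 ω)) μ := by
      refine Integrable.mono' (integrable_const 1) ((hYmeas 0).const_mul t).exp.aestronglyMeasurable ?_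
      filter_upwards with ω
      rw [Real.norm_eq_abs, abs_of_pos (Real.exp_pos _), Real.exp_le_one_iff]
      exact mul_nonpos_of_nonpos_of_nonneg htneg (hYnn 0 ω)
    have h6 : mgf (Y 0) μ t ≤ ∫ ω, (1 - Y 0 ω / (2 * b ^ 2) + (Y 0 ω / (2 * b ^ 2)) ^ 2) ∂μ :=
      integral_mono hintexp0 hintrhs hpt
    have i1 : Integrable (fun ω => 1 - Y 0 ω / (2 * b ^ 2)) μ := by
      exact (integrable_const 1).sub (hYint.div_const _)
    have i2 : Integrable (fun ω => (Y 0 ω / (2 * b ^ 2)) ^ 2) μ := by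
      have e1 : (fun ω => (Y 0 ω / (2 * b ^ 2)) ^ 2) = fun ω => Y 0 ω ^ 2 / (2 * b ^ 2) ^ 2 := by
        funext ω; rw [div_pow]
      rw [e1]; exact hY2int.div_const _
    have h7 : ∫ ω, (1 - Y 0 ω / (2 * b ^ 2) + (Y 0 ω / (2 * b ^ 2)) ^ 2) ∂μ
        = 1 - E / (2 * b ^ 2) + (∫ ω, Y 0 ω ^ 2 ∂μ) / (2 * b ^ 2) ^ 2 := by
      rw [integral_add i1 i2, integral_sub (integrable_const 1) (hYint.div_const _),
        integral_const]
      simp_rw [div_pow]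
      rw [integral_div, integral_div]
      simp [hE]
    have h8 : ∫ ω, Y 0 ω ^ 2 ∂μ ≤ b ^ 2 * E := by
      rw [hE, ← integral_const_mul]
      exact integral_mono hY2int (hYint.const_mul _) (fun ω => by nlinarith [hYnn 0 ω, hYle 0 ω])
    have h9 : 1 - E / (2 * b ^ 2) + (∫ ω, Y 0 ω ^ 2 ∂μ) / (2 * b ^ 2) ^ 2
        ≤ 1 - E / (4 * b ^ 2) := by
      have hb2 : (0:ℝ) < b ^ 2 := by positivity
      have h10 : (∫ ω, Y 0 ω ^ 2 ∂μ) / (2 * b ^ 2) ^ 2 ≤ (b ^ 2 * E) / (2 * b ^ 2) ^ 2 := by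
        gcongr
      have e2 : (b ^ 2 * E) / (2 * b ^ 2) ^ 2 = E / (4 * b ^ 2) := by field_simp; ring
      have e3 : E / (2 * b ^ 2) = 2 * (E / (4 * b ^ 2)) := by field_simp; ring
      rw [e2] at h10
      linarith
    have h11 := Real.add_one_le_exp (-(E / (4 * b ^ 2)))
    linarith
  -- compare ℓ b with E
  have hL : (∫ ω in {ω | |X 0 ω| ≤ b}, X 0 ω ^ 2 ∂μ) ≤ E := by
    have hs : MeasurableSet {ω | |X 0 ω| ≤ b} := measurableSet_le (hmeas 0).abs measurable_const
    have e4 : ∫ ω in {ω | |X 0 ω| ≤ b}, X 0 ω ^ 2 ∂μ = ∫ ω in {ω | |X 0 ω| ≤ b}, Y 0 ω ∂μ := by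
      refine setIntegral_congr_fun hs (fun ω hω => ?_)
      have h12 : |X 0 ω| ≤ b := hω
      have h13 : X 0 ω ^ 2 ≤ b ^ 2 := by nlinarith [abs_nonneg (X 0 ω), sq_abs (X 0 ω)]
      exact (min_eq_left h13).symm
    rw [e4, hE]
    exact setIntegral_le_integral hYint (Eventually.of_forall (hYnn 0))
  have hLnn : 0 ≤ ∫ ω in {ω | |X 0 ω| ≤ b}, X 0 ω ^ 2 ∂μ :=
    setIntegral_nonneg (measurableSet_le (hmeas 0).abs measurable_const) (fun ω _ => sq_nonneg _)
  -- assemble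
  calc (μ {ω | ∑ i ∈ Finset.range n, (X i ω) ^ 2 ≤ b ^ 2}).toReal
      ≤ (μ {ω | (∑ i ∈ Finset.range n, Y i) ω ≤ b ^ 2}).toReal :=
        ENNReal.toReal_mono (measure_ne_top μ _) (measure_mono hsub)
  _ ≤ Real.exp (-t * b ^ 2) * mgf (∑ i ∈ Finset.range n, Y i) μ t := hcher
  _ = Real.exp (1/2) * (mgf (Y 0) μ t) ^ n := by
      rw [hmgfsum]
      congr 1
      · congr 1
        rw [ht]; field_simp
      · rw [Finset.prod_congr rfl (fun i _ => hmgfid i), Finset.prod_const, card_range]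
  _ ≤ Real.exp (1/2) * (Real.exp (-(E / (4 * b ^ 2)))) ^ n := by
      have := pow_le_pow_left₀ (mgf_nonneg (X := Y 0) (μ := μ) (t := t)) hmgf0 n
      nlinarith [Real.exp_pos (1/2:ℝ), pow_nonneg (mgf_nonneg (X := Y 0) (μ := μ) (t := t)) n]
  _ = Real.exp (1/2 + n * (-(E / (4 * b ^ 2)))) := by
      rw [← Real.exp_nat_mul, ← Real.exp_add]
  _ ≤ Real.exp (1 - n * (∫ ω in {ω | |X 0 ω| ≤ b}, (X 0 ω) ^ 2 ∂μ) / (4 * b ^ 2)) := by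
      rw [Real.exp_le_exp]
      have h14 : (n:ℝ) * (∫ ω in {ω | |X 0 ω| ≤ b}, (X 0 ω) ^ 2 ∂μ) / (4 * b ^ 2)
          ≤ (n:ℝ) * E / (4 * b ^ 2) := by gcongr
      have h15 : (n:ℝ) * (-(E / (4 * b ^ 2))) = -((n:ℝ) * E / (4 * b ^ 2)) := by ring
      rw [h15]
      linarith


lemma dan_union (X : ℕ → Ω → ℝ) (hmeas : ∀ i, Measurable (X i))
    (hident : ∀ i, μ.map (X i) = μ.map (X 0)) (n : ℕ) (c : ℝ) :
    (μ {ω | ∃ i : Fin n, c < |X (i : ℕ) ω|}).toReal ≤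
      n * (μ {ω | c < |X 0 ω|}).toReal := by
  have hid : ∀ i : ℕ, μ {ω | c < |X i ω|} = μ {ω | c < |X 0 ω|} := by
    intro i
    have hms : MeasurableSet {x : ℝ | c < |x|} := measurableSet_lt measurable_const measurable_abs
    have h1 : μ {ω | c < |X i ω|} = μ.map (X i) {x | c < |x|} := by
      rw [Measure.map_apply (hmeas i) hms]; rfl
    have h2 : μ {ω | c < |X 0 ω|} = μ.map (X 0) {x | c < |x|} := by
      rw [Measure.map_apply (hmeas 0) hms]; rfl
    rw [h1, h2, hident i]
  have hsub : {ω | ∃ i : Fin n, c < |X (i : ℕ) ω|} ⊆ ⋃ i ∈ Finset.range n, {ω | c < |X i ω|} := by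
    rintro ω ⟨i, hi⟩
    exact Set.mem_biUnion (Finset.mem_range.mpr i.isLt) hi
  have h3 : μ {ω | ∃ i : Fin n, c < |X (i : ℕ) ω|} ≤ (n : ENNReal) * μ {ω | c < |X 0 ω|} := by
    refine le_trans (measure_mono hsub) ?_
    refine le_trans (measure_biUnion_finset_le _ _) ?_
    rw [Finset.sum_congr rfl (fun i _ => hid i), Finset.sum_const, card_range, nsmul_eq_mul]
  calc (μ {ω | ∃ i : Fin n, c < |X (i : ℕ) ω|}).toReal
      ≤ ((n : ENNReal) * μ {ω | c < |X 0 ω|}).toReal :=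
        ENNReal.toReal_mono (by finiteness) h3
  _ = n * (μ {ω | c < |X 0 ω|}).toReal := by
      rw [ENNReal.toReal_mul]; simp

end prob

end DANaux

open DANaux ProbabilityTheory in
/-- If `X ∈ DAN` (i.e. `ℓ(x) = E[X² 1_{|X|≤x}]` is slowly varying at infinity, `X`
non-degenerate) and `EX = 0`, then `max_{1≤i≤n} |Xᵢ| / Vₙ → 0` in probability. -/
theorem max_div_Vn_tendsto_zero_of_DAN
    {Ω : Type*} [MeasurableSpace Ω] (μ : Measure Ω) [IsProbabilityMeasure μ]
    (X : ℕ → Ω → ℝ) (hmeas : ∀ i, Measurable (X i))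
    (hindep : ProbabilityTheory.iIndepFun
      (m := fun _ : ℕ => (inferInstance : MeasurableSpace ℝ)) X μ)
    (hident : ∀ i, μ.map (X i) = μ.map (X 0))
    (hnondeg : ¬ ∃ c : ℝ, ∀ᵐ ω ∂μ, X 0 ω = c)
    (hint : Integrable (X 0) μ) (hmean : ∫ ω, X 0 ω ∂μ = 0)
    (ℓ : ℝ → ℝ) (hℓ : ∀ x, ℓ x = ∫ ω in {ω | |X 0 ω| ≤ x}, (X 0 ω) ^ 2 ∂μ)
    (hslow : ∀ c > (0 : ℝ), Tendsto (fun x => ℓ (c * x) / ℓ x) atTop (nhds 1)) :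
    TendstoInMeasure μ
      (fun n ω => (⨆ i : Fin n, |X (i : ℕ) ω|) /
        Real.sqrt (∑ i ∈ Finset.range n, (X i ω) ^ 2))
      atTop (fun _ => (0 : ℝ)) := by
  -- basic facts about ℓ
  have hmono : Monotone ℓ := by
    intro x y hxy
    rw [hℓ x, hℓ y]
    exact dan_ell_mono (X 0) (hmeas 0) hxy
  have hnn : ∀ x, 0 ≤ ℓ x := fun x => by rw [hℓ x]; exact dan_ell_nonneg (X 0) (hmeas 0) x
  obtain ⟨b₀, hb₀, hb₀pos0⟩ := dan_ell_pos (μ := μ) (X 0) (hmeas 0) hnondeg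
  have hb₀pos : 0 < ℓ b₀ := by rw [hℓ b₀]; exact hb₀pos0
  have hdbl : ∀ δ > (0:ℝ), ∀ᶠ x in atTop, ℓ (2 * x) ≤ (1 + δ) * ℓ x :=
    fun δ hδ => slow_doubling ℓ hmono hnn b₀ hb₀ hb₀pos hslow hδ
  have hsq : ∀ η > (0:ℝ), ∀ᶠ x in atTop, ℓ x ≤ η * x ^ 2 :=
    fun η hη => slow_ell_le_sq ℓ hmono hnn b₀ hb₀ hb₀pos hslow hη
  have htail : ∀ θ > (0:ℝ), ∀ᶠ x in atTop, x ^ 2 * (μ {ω | x < |X 0 ω|}).toReal ≤ θ * ℓ x :=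
    fun θ hθ => dan_tail (X 0) (hmeas 0) ℓ hℓ hmono hnn b₀ hb₀ hb₀pos hdbl hθ
  rw [tendstoInMeasure_iff_dist]
  intro ε hε
  rw [ENNReal.tendsto_atTop_zero]
  intro ρ hρ
  obtain ⟨r, hr, hrρ⟩ : ∃ r : ℝ, 0 < r ∧ ENNReal.ofReal r ≤ ρ := by
    rcases eq_or_ne ρ ⊤ with h | h
    · exact ⟨1, one_pos, by simp [h]⟩
    · exact ⟨ρ.toReal, ENNReal.toReal_pos hρ.ne' h, by rw [ENNReal.ofReal_toReal h]⟩
  set ε' : ℝ := min ε 1 with hε'def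
  have hε' : 0 < ε' := lt_min hε one_pos
  have hε'1 : ε' ≤ 1 := min_le_right _ _
  have hε'ε : ε' ≤ ε := min_le_left _ _
  set lam : ℝ := max 1 (4 * (1 + Real.log (2 / r))) with hlamdef
  have hlam1 : (1:ℝ) ≤ lam := le_max_left _ _
  have hlampos : (0:ℝ) < lam := lt_of_lt_of_le one_pos hlam1
  have hexp : Real.exp (1 - lam / 4) ≤ r / 2 := by
    have h1 : 4 * (1 + Real.log (2 / r)) ≤ lam := le_max_right _ _
    have h2 : 1 - lam / 4 ≤ -Real.log (2 / r) := by linarith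
    calc Real.exp (1 - lam / 4) ≤ Real.exp (-Real.log (2 / r)) := Real.exp_le_exp.mpr h2
    _ = r / 2 := by rw [Real.exp_neg, Real.exp_log (by positivity), inv_div]
  set θ : ℝ := ε' ^ 2 * r / (32 * lam) with hθdef
  have hθ : 0 < θ := by positivity
  obtain ⟨M₁, hM₁⟩ := (htail θ hθ).exists_forall_of_atTop
  -- the scaling sequence
  set S : ℕ → Set ℝ := fun n => {b : ℝ | b₀ ≤ b ∧ (n:ℝ) * ℓ b ≤ lam * b ^ 2} with hSdef
  set B : ℕ → ℝ := fun n => sInf (S n) with hBdef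
  have hSbdd : ∀ n, BddBelow (S n) := fun n => ⟨b₀, fun b hb => hb.1⟩
  have hSne : ∀ n : ℕ, (S n).Nonempty := by
    intro n
    obtain ⟨x0, hx0⟩ := ((hsq (lam / (n+1:ℝ)) (by positivity)).and (eventually_ge_atTop b₀)).exists
    refine ⟨x0, hx0.2, ?_⟩
    have h3 := hx0.1
    have hn1 : (0:ℝ) < (n+1:ℝ) := by positivity
    have h4 : (n:ℝ) * ℓ x0 ≤ (n+1:ℝ) * ℓ x0 := by nlinarith [hnn x0]
    calc (n:ℝ) * ℓ x0 ≤ (n+1:ℝ) * (lam / (n+1:ℝ) * x0 ^ 2) := by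
          refine h4.trans (mul_le_mul_of_nonneg_left h3 hn1.le)
    _ = lam * x0 ^ 2 := by field_simp
  have hBlb : ∀ n, b₀ ≤ B n := fun n => le_csInf (hSne n) (fun b hb => hb.1)
  have hlt : ∀ n : ℕ, ∀ b : ℝ, b₀ ≤ b → b < B n → lam * b ^ 2 < (n:ℝ) * ℓ b := by
    intro n b hb hbB
    by_contra hcon
    push_neg at hcon
    exact absurd (csInf_le (hSbdd n) ⟨hb, hcon⟩) (not_le.mpr hbB)
  have hBtend : ∀ M : ℝ, ∃ N : ℕ, ∀ n ≥ N, M ≤ B n := by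
    intro M
    set M' : ℝ := max M b₀ with hM'def
    have hM'b₀ : b₀ ≤ M' := le_max_right _ _
    refine ⟨⌈lam * M' ^ 2 / ℓ b₀⌉₊ + 1, fun n hn => ?_⟩
    refine le_trans (le_max_left M b₀) (le_csInf (hSne n) ?_)
    intro b hb
    by_contra hcon
    push_neg at hcon
    have hbM' : b < M' := hcon
    have h5 : b ^ 2 ≤ M' ^ 2 := by nlinarith [hb.1, hb₀]
    have h6 : (n:ℝ) ≥ lam * M' ^ 2 / ℓ b₀ + 1 := by
      have := Nat.le_ceil (lam * M' ^ 2 / ℓ b₀)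
      have hn' : (⌈lam * M' ^ 2 / ℓ b₀⌉₊ + 1 : ℝ) ≤ (n:ℝ) := by exact_mod_cast hn
      push_cast at hn' ⊢
      linarith
    have h7 : (n:ℝ) * ℓ b₀ > lam * M' ^ 2 := by
      have h8 : (lam * M' ^ 2 / ℓ b₀ + 1) * ℓ b₀ = lam * M' ^ 2 + ℓ b₀ := by field_simp
      nlinarith [mul_le_mul_of_nonneg_right h6 hb₀pos.le]
    have h9 : (n:ℝ) * ℓ b₀ ≤ (n:ℝ) * ℓ b := by
      have := hmono hb.1
      nlinarith [Nat.cast_nonneg (α := ℝ) n]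
    nlinarith [hb.2]
  -- choose N
  obtain ⟨N₂, hN₂⟩ := hBtend (max (2 * b₀) (2 * M₁ / ε'))
  refine ⟨max N₂ 1, fun n hn => ?_⟩
  have hn1 : 1 ≤ n := le_trans (le_max_right _ _) hn
  have hnN₂ : N₂ ≤ n := le_trans (le_max_left _ _) hn
  have hBn := hN₂ n hnN₂
  have hBn2b₀ : 2 * b₀ ≤ B n := le_trans (le_max_left _ _) hBn
  have hBnM₁ : 2 * M₁ / ε' ≤ B n := le_trans (le_max_right _ _) hBn
  set b : ℝ := B n / 2 with hbdef
  have hb₀b : b₀ ≤ b := by rw [hbdef]; linarith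
  have hbpos : 0 < b := lt_of_lt_of_le hb₀ hb₀b
  have hbB : b < B n := by rw [hbdef]; linarith
  -- Chernoff part
  have hch : (μ {ω | ∑ i ∈ Finset.range n, (X i ω) ^ 2 ≤ b ^ 2}).toReal ≤ r / 2 := by
    have h10 := dan_chernoff X hmeas hindep hident n b hbpos
    rw [← hℓ b] at h10
    have h11 := hlt n b hb₀b hbB
    have h12 : lam / 4 ≤ (n:ℝ) * ℓ b / (4 * b ^ 2) := by
      rw [div_le_div_iff₀ (by norm_num) (by positivity)]
      nlinarith
    refine h10.trans (le_trans (Real.exp_le_exp.mpr (by linarith)) hexp)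
  -- tail part
  have htl : (n:ℝ) * (μ {ω | ε' * b < |X 0 ω|}).toReal ≤ r / 2 := by
    obtain ⟨b'', hb''S, hb''lt⟩ : ∃ b'' ∈ S n, b'' < 2 * B n := by
      refine exists_lt_of_csInf_lt (hSne n) ?_
      have : 0 < B n := lt_of_lt_of_le (by linarith) hBn2b₀
      linarith
    have hBb'' : B n ≤ b'' := csInf_le (hSbdd n) hb''S
    have hxM₁ : M₁ ≤ ε' * b := by
      rw [hbdef]
      rw [div_le_iff₀ hε'] at hBnM₁
      calc M₁ = 2 * M₁ / 2 := by ring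
      _ ≤ B n * ε' / 2 := by linarith
      _ = ε' * (B n / 2) := by ring
    have ht1 := hM₁ (ε' * b) hxM₁
    have hmono2 : ℓ (ε' * b) ≤ ℓ b'' := by
      refine hmono ?_
      have h13 : ε' * b ≤ b := by nlinarith
      have h14 : b ≤ B n := hbB.le
      linarith
    have hb''2 : (n:ℝ) * ℓ b'' ≤ lam * b'' ^ 2 := hb''S.2
    have hb''16 : b'' ^ 2 ≤ 16 * b ^ 2 := by
      have h15 : b'' < 4 * b := by rw [hbdef] at *; linarith
      have h16 : 0 < b'' := lt_of_lt_of_le (lt_of_lt_of_le (by linarith) hBn2b₀) hBb''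
      nlinarith
    set T : ℝ := (μ {ω | ε' * b < |X 0 ω|}).toReal with hTdef
    have hTnn : 0 ≤ T := ENNReal.toReal_nonneg
    have hℓnn : 0 ≤ ℓ (ε' * b) := hnn _
    have hnn' : (0:ℝ) ≤ (n:ℝ) := Nat.cast_nonneg n
    -- (ε'b)² * T ≤ θ ℓ(ε'b); multiply by n and chain
    have h17 : (n:ℝ) * T * (ε' * b) ^ 2 ≤ θ * ((n:ℝ) * ℓ (ε' * b)) := by
      nlinarith [mul_le_mul_of_nonneg_left ht1 hnn']
    have h18 : θ * ((n:ℝ) * ℓ (ε' * b)) ≤ θ * ((n:ℝ) * ℓ b'') := by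
      have := mul_le_mul_of_nonneg_left hmono2 hnn'
      nlinarith
    have h19 : θ * ((n:ℝ) * ℓ b'') ≤ θ * (lam * b'' ^ 2) := mul_le_mul_of_nonneg_left hb''2 hθ.le
    have h20 : θ * (lam * b'' ^ 2) ≤ θ * (lam * (16 * b ^ 2)) := mul_le_mul_of_nonneg_left (mul_le_mul_of_nonneg_left hb''16 hlampos.le) hθ.le
    have h21 : (n:ℝ) * T * (ε' * b) ^ 2 ≤ θ * lam * 16 * b ^ 2 := by nlinarith
    have h22 : θ * lam * 16 = ε' ^ 2 * (r / 2) := by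
      rw [hθdef]; field_simp; ring
    have h23 : (n:ℝ) * T * (ε' ^ 2 * b ^ 2) ≤ (ε' ^ 2 * (r / 2)) * b ^ 2 := by
      have : (ε' * b) ^ 2 = ε' ^ 2 * b ^ 2 := by ring
      rw [← this]
      calc (n:ℝ) * T * (ε' * b) ^ 2 ≤ θ * lam * 16 * b ^ 2 := h21
      _ = (ε' ^ 2 * (r / 2)) * b ^ 2 := by rw [h22]
    have h24 : (0:ℝ) < ε' ^ 2 * b ^ 2 := by positivity
    nlinarith [h23]
  -- event inclusion
  have hincl : {ω | ε ≤ dist ((⨆ i : Fin n, |X (i : ℕ) ω|) /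
        Real.sqrt (∑ i ∈ Finset.range n, (X i ω) ^ 2)) 0} ⊆
      {ω | ∑ i ∈ Finset.range n, (X i ω) ^ 2 ≤ b ^ 2} ∪
      {ω | ∃ i : Fin n, ε' * b < |X (i : ℕ) ω|} := by
    intro ω hω
    simp only [Set.mem_setOf_eq] at hω
    by_cases hA : ∑ i ∈ Finset.range n, (X i ω) ^ 2 ≤ b ^ 2
    · exact Or.inl hA
    · right
      push_neg at hA
      set Ssum : ℝ := ∑ i ∈ Finset.range n, (X i ω) ^ 2 with hSsum
      have hV : b < Real.sqrt Ssum := (Real.lt_sqrt hbpos.le).mpr hA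
      have hVpos : 0 < Real.sqrt Ssum := lt_trans hbpos hV
      have hsupnn : 0 ≤ ⨆ i : Fin n, |X (i : ℕ) ω| :=
        Real.iSup_nonneg (fun i => abs_nonneg _)
      rw [Real.dist_0_eq_abs, abs_of_nonneg (div_nonneg hsupnn (Real.sqrt_nonneg _))] at hω
      have h25 : ε' ≤ (⨆ i : Fin n, |X (i : ℕ) ω|) / Real.sqrt Ssum := le_trans hε'ε hω
      have h26 : ε' * Real.sqrt Ssum ≤ ⨆ i : Fin n, |X (i : ℕ) ω| :=
        (le_div_iff₀ hVpos).mp h25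
      have h27 : ε' * b < ⨆ i : Fin n, |X (i : ℕ) ω| := by nlinarith
      by_contra hcon
      simp only [Set.mem_setOf_eq, not_exists, not_lt] at hcon
      have : Nonempty (Fin n) := ⟨⟨0, hn1⟩⟩
      exact absurd (ciSup_le hcon) (not_le.mpr h27)
  -- finish
  have hfin : (μ {ω | ε ≤ dist ((⨆ i : Fin n, |X (i : ℕ) ω|) /
      Real.sqrt (∑ i ∈ Finset.range n, (X i ω) ^ 2)) 0}).toReal ≤ r := by
    refine le_trans (toReal_union_le _ _ _ hincl) ?_
    have := dan_union (μ := μ) X hmeas hident n (ε' * b)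
    linarith
  refine le_trans ?_ hrρ
  exact (ENNReal.le_ofReal_iff_toReal_le (measure_ne_top μ _) hr.le).mpr hfin
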